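/- For all β, y ∈ ℂ and every m ∈ ℕ, the polynomials R^(1)_m satisfy the recurrence R^(1)_{m+1}(y) = (y − m(m+1))·R^(1)_m(y) + (β/2−m+1)_{2m}·(y − (β/2)(β/2+1)). -/

import Mathlib

open Finset

/-- Ascending Pochhammer symbol `(a)_k = ∏_{i=0}^{k-1} (a+i)`. -/
noncomputable def poch (a : ℂ) (k : ℕ) : ℂ := ∏ i ∈ Finset.range k, (a + i)

/-- `R_k(y;α) = ∏_{l=1}^{k} (y - (α-l)(α-l+1))`. -/
noncomputable def Rpoly (y α : ℂ) (k : ℕ) : ℂ :=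
  ∏ l ∈ Finset.range k, (y - (α - (l + 1)) * (α - (l + 1) + 1))

/-- `R^(1)_k(y) = ∑_{j=1}^{k} (β/2-k+j+1)_{2(k-j)} (y - (β/2)(β/2+1)) R_{j-1}(y;k)`. -/
noncomputable def R1 (β y : ℂ) (k : ℕ) : ℂ :=
  ∑ j ∈ Finset.Icc 1 k,
    poch (β/2 - k + j + 1) (2*(k - j)) * (y - β/2*(β/2+1)) * Rpoly y k (j-1)

/-- `s^(-)_m(y)`. -/
noncomputable def sminus (β lam y : ℂ) (m : ℕ) : ℂ :=
  ∑ k ∈ Finset.range (m+1),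
    (m.choose k : ℂ) * poch (β/2 - lam - m) (m-k) * poch (-β/2 - m - 1) (m-k) * Rpoly y 0 k

/-- `s^(+)_m(y)`. -/
noncomputable def splus (β lam y : ℂ) (m : ℕ) : ℂ :=
  ∑ k ∈ Finset.range (m+1),
    (m.choose k : ℂ) * poch (β/2 - lam - m) (m-k) * poch (-β/2 - m + 1) (m-k) * Rpoly y 0 k

/-- Coefficients `D^(1)_k(m)`. -/
noncomputable def D1 (β lam : ℂ) (m k : ℕ) : ℂ :=
  if k = m then lam - β + 2*m
  else (m.choose k : ℂ) * poch (lam - β/2 + k + 1) (m-k) * poch (β/2 + k + 1) (m-k-1) *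
    ((k:ℂ)*(lam+β+2*m) + β/2*(lam-β-2*m))

/-- `s^(1)_m(y) = ∑_{k=0}^m D^(1)_k(m) R^(1)_k(y)`. -/
noncomputable def s1 (β lam y : ℂ) (m : ℕ) : ℂ :=
  ∑ k ∈ Finset.range (m+1), D1 β lam m k * R1 β y k

/-- recurrence for `R^(1)_m`. -/
theorem R1_recurrence (β y : ℂ) (m : ℕ) :
    R1 β y (m+1) = (y - (m:ℂ)*((m:ℂ)+1)) * R1 β y m
      + poch (β/2 - (m:ℂ) + 1) (2*m) * (y - β/2*(β/2+1)) := by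
  have hR : ∀ k : ℕ, Rpoly y ((m:ℂ)+1) (k+1) = (y - (m:ℂ)*((m:ℂ)+1)) * Rpoly y m k := by
    intro k
    unfold Rpoly
    rw [Finset.prod_range_succ', mul_comm]
    congr 1
    · push_cast; ring
    · exact Finset.prod_congr rfl fun l _ => by push_cast; ring
  simp only [R1, ← Finset.Ico_add_one_right_eq_Icc, Finset.sum_Ico_eq_sum_range,
    Nat.succ_sub_one, Nat.add_sub_cancel]
  rw [Finset.sum_range_succ', Finset.mul_sum]
  congr 1
  · apply Finset.sum_congr rfl
    intro i hi
    simp only [Finset.mem_range] at hi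
    have h1 : 1 + (i + 1) - 1 = i + 1 := by omega
    have h2 : m + 1 - (1 + (i + 1)) = m - (1 + i) := by omega
    have h3 : 1 + i - 1 = i := by omega
    rw [h1, h2, h3]
    push_cast
    rw [hR i]
    ring
  · have h0 : (1:ℕ) + 0 - 1 = 0 := rfl
    rw [h0]
    simp only [Rpoly, Finset.range_zero, Finset.prod_empty, mul_one]
    have : m + 1 - (1 + 0) = m := by omega
    rw [this]
    push_cast
    ring_nf
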